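/- Let (Λ_Q, f) be a C^{1+Lip} expansive and transitive Markov system. Then for every α > 0 one has H_HT(α) ⊆ H: every point with infinitely many hyperbolic times with exponent α has infinitely many hyperbolic instants. -/

import Mathlib

open Set Metric Filter MeasureTheory
open scoped Classical

/-- The word `[ω 0, ω 1, …, ω (n-1)]` read off from the sequence `ω`. -/
def wordOf {p : ℕ} (ω : ℕ → Fin p) (n : ℕ) : List (Fin p) :=
  (List.range n).map ω

/-- The cylinder sets `Δ_{i₁…iₙ} = g_{i₁…i_{n-1}}(I_{iₙ})` of the iterated function
system given by the big interval `I`, the subintervals `Isub i` and the maps `g i`;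
by convention `Δ_∅ = I`. -/
def cylOf {p : ℕ} (I : Set ℝ) (Isub : Fin p → Set ℝ) (g : Fin p → ℝ → ℝ) :
    List (Fin p) → Set ℝ
  | [] => I
  | [i] => Isub i
  | i :: j :: w => g i '' cylOf I Isub g (j :: w)

/-- The sequence `ω` contains the word `w` as a sub-word starting at position `n`. -/
def containsAt {p : ℕ} (ω : ℕ → Fin p) (w : List (Fin p)) (n : ℕ) : Prop :=
  ∀ k : ℕ, (hk : k < w.length) → ω (n + k) = w.get ⟨k, hk⟩

/-- The sequence `ω` belongs to `Σ_Q`, i.e. it contains no word of `Q` as a sub-word. -/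
def avoids {p : ℕ} (Q : Finset (List (Fin p))) (ω : ℕ → Fin p) : Prop :=
  ∀ w ∈ Q, ∀ n : ℕ, ¬ containsAt ω w n

/-- The limit set `Λ_Q = π(Σ_Q)`: points lying, for some `ω ∈ Σ_Q`, in all the
cylinders `Δ_{ω₀…ω_{n-1}}`. -/
def limitSetOf {p : ℕ} (I : Set ℝ) (Isub : Fin p → Set ℝ) (g : Fin p → ℝ → ℝ)
    (Q : Finset (List (Fin p))) : Set ℝ :=
  { x | ∃ ω : ℕ → Fin p, avoids Q ω ∧ ∀ n : ℕ, x ∈ cylOf I Isub g (wordOf ω n) }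

/-- `gIter g ω n = g_{i_n … i_1} = g_{ω (n-1)} ∘ ⋯ ∘ g_{ω 0}`. -/
def gIter {p : ℕ} (g : Fin p → ℝ → ℝ) (ω : ℕ → Fin p) : ℕ → ℝ → ℝ
  | 0 => id
  | n + 1 => g (ω n) ∘ gIter g ω n

/-- The derivative of the composition `gIter g ω n` at `x` (chain rule product). -/
noncomputable def gIterDer {p : ℕ} (g gder : Fin p → ℝ → ℝ) (ω : ℕ → Fin p)
    (n : ℕ) (x : ℝ) : ℝ :=
  ∏ k ∈ Finset.range n, gder (ω k) (gIter g ω k x)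

/-- Prepending the finite word `w` to the infinite sequence `ω`. -/
def prependWord {p : ℕ} (w : List (Fin p)) (ω : ℕ → Fin p) : ℕ → Fin p :=
  fun n => if h : n < w.length then w.get ⟨n, h⟩ else ω (n - w.length)

/-- `l(Σ_Q)`: the minimum, over all finite sets `Q'` of words with `Σ_{Q'} = Σ_Q`,
of the maximal length `l(Q')` of words of `Q'`. -/
noncomputable def minRepLen {p : ℕ} (Q : Finset (List (Fin p))) : ℕ :=
  sInf { n : ℕ | ∃ Q' : Finset (List (Fin p)),
    (∀ ω : ℕ → Fin p, avoids Q' ω ↔ avoids Q ω) ∧ Q'.sup List.length = n }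

/-- A `C^{1+Lip}` expansive and transitive Markov system `(Λ_Q, f)`. -/
structure ExpansiveMarkovSystem (p : ℕ) where
  /-- the alphabet is nonempty -/
  hp : 0 < p
  /-- the ambient closed interval `I` -/
  I : Set ℝ
  hI : ∃ a b : ℝ, a < b ∧ I = Set.Icc a b
  /-- the pairwise disjoint closed subintervals `I₁, …, I_p` -/
  Isub : Fin p → Set ℝ
  hIsub : ∀ i, ∃ a b : ℝ, a < b ∧ Isub i = Set.Icc a b
  hsubI : ∀ i, Isub i ⊆ I
  hdisj : ∀ i j, i ≠ j → Disjoint (Isub i) (Isub j)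
  /-- the contractions `g i`, defined on `⋃ j, Isub j` -/
  g : Fin p → ℝ → ℝ
  /-- the derivative of `g i` on `⋃ j, Isub j` -/
  gder : Fin p → ℝ → ℝ
  hg_inj : ∀ i, Set.InjOn (g i) (⋃ j, Isub j)
  hg_range : ∀ i, g i '' (⋃ j, Isub j) ⊆ interior (Isub i)
  hg_deriv : ∀ i, ∀ x ∈ ⋃ j, Isub j,
    HasDerivWithinAt (g i) (gder i x) (⋃ j, Isub j) x
  hgder_ne : ∀ i, ∀ x ∈ ⋃ j, Isub j, gder i x ≠ 0
  hgder_cont : ∀ i, ContinuousOn (gder i) (⋃ j, Isub j)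
  /-- `log |g i'|` is Lipschitz on the domain -/
  hgder_lip : ∀ i, ∃ θ : ℝ, ∀ x ∈ ⋃ j, Isub j, ∀ y ∈ ⋃ j, Isub j,
    abs (Real.log (abs (gder i x)) - Real.log (abs (gder i y))) ≤ θ * |x - y|
  /-- the expanding map `f`, with `f (g i x) = x` -/
  f : ℝ → ℝ
  /-- the derivative `f'` of `f` on the ranges of the `g i` -/
  fder : ℝ → ℝ
  hf : ∀ i, ∀ x ∈ ⋃ j, Isub j, f (g i x) = x
  hfder : ∀ i, ∀ x ∈ ⋃ j, Isub j, fder (g i x) = (gder i x)⁻¹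
  /-- the generator (expansivity) condition: `d_n → 0` -/
  hgen : ∀ ε : ℝ, 0 < ε → ∃ N : ℕ, ∀ w : List (Fin p), N ≤ w.length →
    Metric.diam (cylOf I Isub g w) < ε
  /-- the finite set of forbidden words -/
  Q : Finset (List (Fin p))
  /-- `Σ_Q` is completely invariant: `σ(Σ_Q) = Σ_Q` -/
  hQinv : ∀ ω : ℕ → Fin p, avoids Q ω →
    ∃ ω' : ℕ → Fin p, avoids Q ω' ∧ ∀ n : ℕ, ω' (n + 1) = ω n
  /-- `f|Λ_Q` is topologically transitive -/
  htrans : ∀ U V : Set ℝ, IsOpen U → IsOpen V →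
    (U ∩ limitSetOf I Isub g Q).Nonempty → (V ∩ limitSetOf I Isub g Q).Nonempty →
    ∃ n : ℕ, ∃ x ∈ U ∩ limitSetOf I Isub g Q, f^[n] x ∈ V

namespace ExpansiveMarkovSystem

variable {p : ℕ} (S : ExpansiveMarkovSystem p)

/-- The common domain `⋃ j, I_j` of the maps `g i`. -/
def dom : Set ℝ := ⋃ j, S.Isub j

/-- The cylinder `Δ_w` associated to the word `w`. -/
def cyl (w : List (Fin p)) : Set ℝ := cylOf S.I S.Isub S.g w

/-- The limit set `Λ_Q`. -/
def limitSet : Set ℝ := limitSetOf S.I S.Isub S.g S.Q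

/-- The domain of `f`, i.e. the union of the ranges of the `g i`. -/
def domF : Set ℝ := ⋃ i, S.g i '' S.dom

/-- The derivative `(fⁿ)'(x)` of the `n`-th iterate of `f` at `x`. -/
noncomputable def derIter (n : ℕ) (x : ℝ) : ℝ :=
  ∏ k ∈ Finset.range n, S.fder (S.f^[k] x)

/-- The Lyapunov exponent `χ(x) = limsup (1/n) log |(fⁿ)'(x)|`. -/
noncomputable def lyap (x : ℝ) : ℝ :=
  Filter.limsup (fun n : ℕ => Real.log |S.derIter n x| / n) Filter.atTop

/-- The set `H` of points of `Λ_Q` with infinitely many hyperbolic instants. -/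
def hypSet : Set ℝ :=
  { x ∈ S.limitSet | ∃ c₁ : ℝ, 0 < c₁ ∧ ∃ c₂ : ℝ, 0 < c₂ ∧
      ∃ n : ℕ → ℕ, StrictMono n ∧
        ∃ r : ℕ → ℝ, (∀ k, 0 < r k) ∧ Antitone r ∧
          Filter.Tendsto r Filter.atTop (nhds 0) ∧
          ∀ k : ℕ,
            (∀ y ∈ Metric.ball x (r k), ∀ j < n k, S.f^[j] y ∈ S.domF) ∧
            c₁ < Metric.diam (S.f^[n k] '' Metric.ball x (r k)) ∧
            (∀ y ∈ Metric.ball x (r k), ∀ z ∈ Metric.ball x (r k),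
              |S.derIter (n k) y| / |S.derIter (n k) z| < c₂) }

/-- `x` is a parabolic periodic point: `f^m(x) = x` and `|(f^m)'(x)| = 1`. -/
def IsParabolicPeriodic (x : ℝ) : Prop :=
  x ∈ S.limitSet ∧ ∃ m : ℕ, 1 ≤ m ∧ S.f^[m] x = x ∧ |S.derIter m x| = 1

/-- `ν` is a `t`-conformal (Borel probability) measure supported on `Λ_Q`. -/
def IsConformal (ν : Measure ℝ) (t : ℝ) : Prop :=
  IsProbabilityMeasure ν ∧ ν S.limitSetᶜ = 0 ∧
    ∀ A : Set ℝ, MeasurableSet A → A ⊆ S.limitSet → Set.InjOn S.f A →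
      ν (S.f '' A) = ∫⁻ x in A, ENNReal.ofReal (|S.fder x| ^ t) ∂ν

/-- `t_c = inf {t ≥ 0 : a t-conformal measure on Λ_Q exists}`. -/
noncomputable def tc : ℝ :=
  sInf { t : ℝ | 0 ≤ t ∧ ∃ ν : Measure ℝ, S.IsConformal ν t }

/-- `n` is a hyperbolic time for `x` with exponent `α`. -/
def IsHypTime (α : ℝ) (x : ℝ) (n : ℕ) : Prop :=
  ∀ k : ℕ, 1 ≤ k → k ≤ n → Real.exp (k * α) ≤ |S.derIter k (S.f^[n - k] x)|

/-- `H_HT(α)`: the points of `Λ_Q` with infinitely many hyperbolic times with exponent `α`. -/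
def HHT (α : ℝ) : Set ℝ :=
  { x ∈ S.limitSet | ∀ N : ℕ, ∃ n : ℕ, N ≤ n ∧ S.IsHypTime α x n }

end ExpansiveMarkovSystem

/-! ### Auxiliary development -/

/-- shift of a sequence by `m` -/
def shiftn {p : ℕ} (m : ℕ) (ω : ℕ → Fin p) : ℕ → Fin p := fun k => ω (m + k)

lemma shiftn_zero {p : ℕ} (ω : ℕ → Fin p) : shiftn 0 ω = ω :=
  funext fun k => congrArg ω (Nat.zero_add k)

lemma shiftn_shiftn {p : ℕ} (a b : ℕ) (ω : ℕ → Fin p) :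
    shiftn a (shiftn b ω) = shiftn (b + a) ω :=
  funext fun k => congrArg ω (by omega)

lemma wordOf_length {p : ℕ} (ω : ℕ → Fin p) (n : ℕ) : (wordOf ω n).length = n := by
  simp [wordOf]

lemma wordOf_zero {p : ℕ} (ω : ℕ → Fin p) : wordOf ω 0 = [] := rfl

lemma wordOf_one {p : ℕ} (ω : ℕ → Fin p) : wordOf ω 1 = [ω 0] := rfl

lemma wordOf_succ_left {p : ℕ} (ω : ℕ → Fin p) (n : ℕ) :
    wordOf ω (n + 1) = ω 0 :: wordOf (shiftn 1 ω) n := by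
  unfold wordOf
  rw [List.range_succ_eq_map, List.map_cons, List.map_map]
  congr 1
  apply List.map_congr_left
  intro a _
  simp [shiftn, Nat.add_comm]

lemma wordOf_succ_right {p : ℕ} (ω : ℕ → Fin p) (n : ℕ) :
    wordOf ω (n + 1) = wordOf ω n ++ [ω n] := by
  unfold wordOf
  rw [List.range_succ, List.map_append, List.map_singleton]

lemma wordOf_ne_nil {p : ℕ} (ω : ℕ → Fin p) (n : ℕ) : wordOf ω (n + 1) ≠ [] := by
  intro h
  have := wordOf_length ω (n + 1)
  rw [h] at this
  simp at this

lemma wordOf_drop {p : ℕ} (ω : ℕ → Fin p) (m d : ℕ) :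
    (wordOf ω m).drop d = wordOf (shiftn d ω) (m - d) := by
  apply List.ext_getElem
  · simp [wordOf]
  · intro i h1 h2
    simp only [wordOf, List.getElem_drop, List.getElem_map, List.getElem_range]
    congr 1
namespace ExpansiveMarkovSystem

variable {p : ℕ} (S : ExpansiveMarkovSystem p)

lemma aIsub_subset_dom (j : Fin p) : S.Isub j ⊆ S.dom :=
  Set.subset_iUnion S.Isub j

lemma aInterior_subset_dom {j : Fin p} : interior (S.Isub j) ⊆ S.dom :=
  interior_subset.trans (S.aIsub_subset_dom j)

lemma ag_cont (i : Fin p) : ContinuousOn (S.g i) S.dom :=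
  fun x hx => (S.hg_deriv i x hx).continuousWithinAt

lemma adom_mem_nhds {j : Fin p} {u : ℝ} (hu : u ∈ interior (S.Isub j)) :
    S.dom ∈ nhds u :=
  mem_nhds_iff.2 ⟨interior (S.Isub j), S.aInterior_subset_dom, isOpen_interior, hu⟩

lemma ag_hasDerivAt {i j : Fin p} {u : ℝ} (hu : u ∈ interior (S.Isub j)) :
    HasDerivAt (S.g i) (S.gder i u) u :=
  (S.hg_deriv i u (S.aInterior_subset_dom hu)).hasDerivAt (S.adom_mem_nhds hu)

lemma adom_compact : IsCompact S.dom := by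
  apply isCompact_iUnion
  intro j
  obtain ⟨a, b, _, hI⟩ := S.hIsub j
  rw [hI]; exact isCompact_Icc

lemma abranch_w {i j : Fin p} {u : ℝ} (hu : u ∈ interior (S.Isub j)) {V : Set ℝ}
    (hV : V ∈ nhds u) :
    ∃ W : Set ℝ, IsOpen W ∧ S.g i u ∈ W ∧ ∀ z ∈ W, ∃ v, v ∈ V ∧ v ∈ S.Isub j ∧ z = S.g i v := by
  obtain ⟨a, b, hab, hI⟩ := S.hIsub j
  have hu' : u ∈ Set.Ioo a b := by rw [hI, interior_Icc] at hu; exact hu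
  have h2 : Set.Ioo a b ∈ nhds u := isOpen_Ioo.mem_nhds hu'
  obtain ⟨ε, hε, hball⟩ := Metric.mem_nhds_iff.1 (Filter.inter_mem hV h2)
  have hsub : Set.Icc (u - ε / 2) (u + ε / 2) ⊆ V ∩ Set.Ioo a b := by
    intro z hz
    apply hball
    rw [Real.ball_eq_Ioo]
    exact ⟨by linarith [hz.1], by linarith [hz.2]⟩
  have hIccI : Set.Icc (u - ε / 2) (u + ε / 2) ⊆ S.Isub j := by
    intro z hz
    rw [hI]
    exact Set.Ioo_subset_Icc_self (hsub hz).2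
  have hcd : u - ε / 2 < u + ε / 2 := by linarith
  have hcont : ContinuousOn (S.g i) (Set.Icc (u - ε / 2) (u + ε / 2)) :=
    (S.ag_cont i).mono (hIccI.trans (S.aIsub_subset_dom j))
  have hinj : Set.InjOn (S.g i) (Set.Icc (u - ε / 2) (u + ε / 2)) :=
    (S.hg_inj i).mono (hIccI.trans (S.aIsub_subset_dom j))
  have humem : u ∈ Set.Ioo (u - ε / 2) (u + ε / 2) := by constructor <;> linarith
  have main : ∀ z ∈ S.g i '' Set.Ioo (u - ε / 2) (u + ε / 2),
      ∃ v, v ∈ V ∧ v ∈ S.Isub j ∧ z = S.g i v := by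
    rintro z ⟨v, hv, rfl⟩
    exact ⟨v, (hsub (Set.Ioo_subset_Icc_self hv)).1, hIccI (Set.Ioo_subset_Icc_self hv), rfl⟩
  rcases hcont.strictMonoOn_of_injOn_Icc' hcd.le hinj with hm | hm
  · refine ⟨S.g i '' Set.Ioo (u - ε / 2) (u + ε / 2), ?_, ⟨u, humem, rfl⟩, main⟩
    have himg : S.g i '' Set.Ioo (u - ε / 2) (u + ε / 2)
        = Set.Ioo (S.g i (u - ε / 2)) (S.g i (u + ε / 2)) := by
      apply Set.Subset.antisymm
      · rintro _ ⟨v, hv, rfl⟩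
        exact ⟨hm (Set.left_mem_Icc.2 hcd.le) (Set.Ioo_subset_Icc_self hv) hv.1,
          hm (Set.Ioo_subset_Icc_self hv) (Set.right_mem_Icc.2 hcd.le) hv.2⟩
      · exact intermediate_value_Ioo hcd.le hcont
    rw [himg]; exact isOpen_Ioo
  · refine ⟨S.g i '' Set.Ioo (u - ε / 2) (u + ε / 2), ?_, ⟨u, humem, rfl⟩, main⟩
    have himg : S.g i '' Set.Ioo (u - ε / 2) (u + ε / 2)
        = Set.Ioo (S.g i (u + ε / 2)) (S.g i (u - ε / 2)) := by
      apply Set.Subset.antisymm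
      · rintro _ ⟨v, hv, rfl⟩
        exact ⟨hm (Set.Ioo_subset_Icc_self hv) (Set.right_mem_Icc.2 hcd.le) hv.2,
          hm (Set.left_mem_Icc.2 hcd.le) (Set.Ioo_subset_Icc_self hv) hv.1⟩
      · exact intermediate_value_Ioo' hcd.le hcont
    rw [himg]; exact isOpen_Ioo

lemma af_branch {i j : Fin p} {u : ℝ} (hu : u ∈ interior (S.Isub j)) :
    S.f (S.g i u) = u ∧ HasDerivAt S.f (S.fder (S.g i u)) (S.g i u) := by
  have hud : u ∈ S.dom := S.aInterior_subset_dom hu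
  have hfu : S.f (S.g i u) = u := S.hf i u hud
  have hcont : ContinuousAt S.f (S.g i u) := by
    have : Filter.Tendsto S.f (nhds (S.g i u)) (nhds u) := by
      rw [Filter.tendsto_def]
      intro V hV
      obtain ⟨W, hWo, hWm, hWp⟩ := S.abranch_w (i := i) hu hV
      refine Filter.mem_of_superset (hWo.mem_nhds hWm) ?_
      intro z hz
      obtain ⟨v, hvV, hvI, rfl⟩ := hWp z hz
      show S.f (S.g i v) ∈ V
      rw [S.hf i v (S.aIsub_subset_dom j hvI)]
      exact hvV
    simpa [ContinuousAt, hfu] using this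
  have hloc : ∀ᶠ z in nhds (S.g i u), S.g i (S.f z) = z := by
    obtain ⟨W, hWo, hWm, hWp⟩ := S.abranch_w (i := i) hu (Filter.univ_mem)
    filter_upwards [hWo.mem_nhds hWm] with z hz
    obtain ⟨v, _, hvI, rfl⟩ := hWp z hz
    rw [S.hf i v (S.aIsub_subset_dom j hvI)]
  have hgd : HasDerivAt (S.g i) (S.gder i u) (S.f (S.g i u)) := by
    rw [hfu]; exact S.ag_hasDerivAt hu
  have hne : S.gder i u ≠ 0 := S.hgder_ne i u hud
  have hd := HasDerivAt.of_local_left_inverse hcont hgd hne hloc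
  refine ⟨hfu, ?_⟩
  rw [S.hfder i u hud]
  exact hd

lemma afder_ne {i : Fin p} {u : ℝ} (hu : u ∈ S.dom) : S.fder (S.g i u) ≠ 0 := by
  rw [S.hfder i u hu]
  exact inv_ne_zero (S.hgder_ne i u hu)

end ExpansiveMarkovSystem
namespace ExpansiveMarkovSystem

variable {p : ℕ} (S : ExpansiveMarkovSystem p)

/-- inverse-branch word map: `gw [i₀,…,i_{m-1}] t = g i₀ (g i₁ (… (g i_{m-1} t)))` -/
def gw : List (Fin p) → ℝ → ℝ
  | [], t => t
  | i :: w, t => S.g i (gw w t)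

@[simp] lemma gw_nil (t : ℝ) : S.gw [] t = t := rfl

@[simp] lemma gw_cons (i : Fin p) (w : List (Fin p)) (t : ℝ) :
    S.gw (i :: w) t = S.g i (S.gw w t) := rfl

lemma gw_mem_dom {w : List (Fin p)} {t : ℝ} (ht : t ∈ S.dom) : S.gw w t ∈ S.dom := by
  induction w with
  | nil => exact ht
  | cons i w IH =>
    exact S.aInterior_subset_dom (S.hg_range i ⟨S.gw w t, IH, rfl⟩)

lemma gw_cons_mem {i : Fin p} {w : List (Fin p)} {t : ℝ} (ht : t ∈ S.dom) :
    S.gw (i :: w) t ∈ S.g i '' S.dom :=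
  ⟨S.gw w t, S.gw_mem_dom ht, rfl⟩

lemma gw_append (w w' : List (Fin p)) (t : ℝ) :
    S.gw (w ++ w') t = S.gw w (S.gw w' t) := by
  induction w with
  | nil => rfl
  | cons i w IH => simp [IH]

lemma gw_contOn (w : List (Fin p)) : ContinuousOn (S.gw w) S.dom := by
  induction w with
  | nil => exact continuousOn_id
  | cons i w IH =>
    exact (S.ag_cont i).comp IH (fun t ht => S.gw_mem_dom ht)

lemma f_gw (i : Fin p) (w : List (Fin p)) {t : ℝ} (ht : t ∈ S.dom) :
    S.f (S.gw (i :: w) t) = S.gw w t :=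
  S.hf i (S.gw w t) (S.gw_mem_dom ht)

lemma iter_gw : ∀ (k : ℕ) (w : List (Fin p)) {t : ℝ}, t ∈ S.dom → k ≤ w.length →
    S.f^[k] (S.gw w t) = S.gw (w.drop k) t := by
  intro k
  induction k with
  | zero => intro w t ht _; simp
  | succ k IH =>
    intro w t ht hk
    match w with
    | [] => simp at hk
    | i :: w' =>
      rw [Function.iterate_succ_apply, S.f_gw i w' ht, List.drop_succ_cons]
      exact IH w' ht (by simpa using Nat.le_of_succ_le_succ hk)

lemma iter_gw_full (w : List (Fin p)) {t : ℝ} (ht : t ∈ S.dom) :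
    S.f^[w.length] (S.gw w t) = t := by
  rw [S.iter_gw w.length w ht le_rfl, List.drop_length, gw_nil]

@[simp] lemma derIter_zero (y : ℝ) : S.derIter 0 y = 1 := by
  simp [derIter]

lemma derIter_succ' (n : ℕ) (y : ℝ) :
    S.derIter (n + 1) y = S.fder y * S.derIter n (S.f y) := by
  unfold derIter
  rw [Finset.prod_range_succ']
  simp only [Function.iterate_succ_apply, Function.iterate_zero_apply]
  ring

lemma derIter_gw_ne {w : List (Fin p)} {t : ℝ} (ht : t ∈ S.dom) :
    S.derIter w.length (S.gw w t) ≠ 0 := by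
  induction w with
  | nil => simp
  | cons i w IH =>
    rw [List.length_cons, derIter_succ', gw_cons, S.hf i (S.gw w t) (S.gw_mem_dom ht)]
    exact mul_ne_zero (S.afder_ne (S.gw_mem_dom ht)) IH

lemma hasDerivAt_iter_gw {w : List (Fin p)} {t : ℝ}
    (ht : ∃ j, t ∈ interior (S.Isub j)) :
    HasDerivAt (S.f^[w.length]) (S.derIter w.length (S.gw w t)) (S.gw w t) := by
  induction w with
  | nil =>
    simp only [List.length_nil, Function.iterate_zero, gw_nil, derIter_zero]
    exact hasDerivAt_id t
  | cons i w IH =>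
    have htd : t ∈ S.dom := by
      obtain ⟨j, hj⟩ := ht; exact S.aInterior_subset_dom hj
    have hu : ∃ j', S.gw w t ∈ interior (S.Isub j') := by
      match w with
      | [] => exact ht
      | i' :: w' =>
        exact ⟨i', S.hg_range i' (S.gw_cons_mem htd)⟩
    obtain ⟨j', hu'⟩ := hu
    have hfb := S.af_branch (i := i) hu'
    set y := S.gw (i :: w) t with hy
    have hyg : y = S.g i (S.gw w t) := rfl
    have hfy : S.f y = S.gw w t := S.f_gw i w htd
    have hIH : HasDerivAt (S.f^[w.length]) (S.derIter w.length (S.f y)) (S.f y) := by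
      rw [hfy]; exact IH
    have hdf : HasDerivAt S.f (S.fder y) y := by rw [hyg]; exact hfb.2
    have hcomp := HasDerivAt.comp y hIH hdf
    rw [List.length_cons, derIter_succ', Function.iterate_succ]
    rw [mul_comm]
    exact hcomp

end ExpansiveMarkovSystem
namespace ExpansiveMarkovSystem

variable {p : ℕ} (S : ExpansiveMarkovSystem p)

lemma acyl_cons {w : List (Fin p)} (hw : w ≠ []) (i : Fin p) :
    S.cyl (i :: w) = S.g i '' S.cyl w := by
  match w with
  | [] => exact absurd rfl hw
  | j :: w' => rfl

lemma acyl_subset_isub : ∀ (w : List (Fin p)) (i : Fin p), S.cyl (i :: w) ⊆ S.Isub i := by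
  intro w
  induction w with
  | nil => intro i; exact subset_rfl
  | cons j w' IH =>
    intro i
    show S.g i '' S.cyl (j :: w') ⊆ S.Isub i
    refine (Set.image_mono (f := S.g i) ((IH j).trans (S.aIsub_subset_dom j))).trans ?_
    exact (S.hg_range i).trans interior_subset

lemma aorb_step {x : ℝ} {ω : ℕ → Fin p} (hx : ∀ m, x ∈ S.cyl (wordOf ω m)) :
    x = S.g (ω 0) (S.f x) ∧ ∀ m, S.f x ∈ S.cyl (wordOf (shiftn 1 ω) m) := by
  have key : ∀ m, x = S.g (ω 0) (S.f x) ∧ S.f x ∈ S.cyl (wordOf (shiftn 1 ω) (m + 1)) := by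
    intro m
    have h2 := hx (m + 2)
    rw [show m + 2 = (m + 1) + 1 from rfl, wordOf_succ_left,
      S.acyl_cons (wordOf_ne_nil _ m)] at h2
    obtain ⟨y, hy, hxy⟩ := h2
    have hyI : y ∈ S.Isub (shiftn 1 ω 0) := by
      have := hy
      rw [wordOf_succ_left] at this
      exact S.acyl_subset_isub _ _ this
    have hyd : y ∈ S.dom := S.aIsub_subset_dom _ hyI
    have hfx : S.f x = y := by rw [← hxy]; exact S.hf _ y hyd
    refine ⟨by rw [hfx, hxy], by rw [hfx]; exact hy⟩
  refine ⟨(key 0).1, ?_⟩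
  intro m
  match m with
  | 0 =>
    show S.f x ∈ S.I
    have h1 := (key 0).2
    have : S.f x ∈ S.Isub (shiftn 1 ω 0) := by
      rw [wordOf_succ_left] at h1
      exact S.acyl_subset_isub _ _ h1
    exact S.hsubI _ this
  | m + 1 => exact (key m).2

lemma aorb {x : ℝ} {ω : ℕ → Fin p} (hx : ∀ m, x ∈ S.cyl (wordOf ω m)) :
    ∀ n m, S.f^[n] x ∈ S.cyl (wordOf (shiftn n ω) m) := by
  intro n
  induction n with
  | zero => intro m; rw [shiftn_zero]; exact hx m
  | succ n IH =>
    intro m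
    rw [Function.iterate_succ_apply']
    have := (S.aorb_step IH).2 m
    rw [shiftn_shiftn] at this
    exact this

lemma arep {x : ℝ} {ω : ℕ → Fin p} (hx : ∀ m, x ∈ S.cyl (wordOf ω m)) :
    ∀ n, x = S.gw (wordOf ω n) (S.f^[n] x) := by
  intro n
  induction n with
  | zero => rfl
  | succ n IH =>
    have h1 := (S.aorb_step (S.aorb hx n)).1
    have h0 : shiftn n ω 0 = ω n := by simp [shiftn]
    rw [h0] at h1
    rw [Function.iterate_succ_apply', wordOf_succ_right, S.gw_append]
    show x = S.gw (wordOf ω n) (S.g (ω n) (S.f (S.f^[n] x)))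
    rw [← h1]
    exact IH

lemma arep' {x : ℝ} {ω : ℕ → Fin p} (hx : ∀ m, x ∈ S.cyl (wordOf ω m)) (m k : ℕ) :
    S.f^[m] x = S.gw (wordOf (shiftn m ω) k) (S.f^[m + k] x) := by
  have := S.arep (x := S.f^[m] x) (ω := shiftn m ω) (S.aorb hx m) k
  rw [← Function.iterate_add_apply, Nat.add_comm k m] at this
  exact this

lemma aIsub_mem {x : ℝ} {ω : ℕ → Fin p} (hx : ∀ m, x ∈ S.cyl (wordOf ω m)) (n : ℕ) :
    S.f^[n] x ∈ S.Isub (ω n) := by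
  have h := S.aorb hx n 1
  rw [wordOf_one] at h
  have h0 : shiftn n ω 0 = ω n := by simp [shiftn]
  rw [h0] at h
  exact h

lemma as_mem {x : ℝ} {ω : ℕ → Fin p} (hx : ∀ m, x ∈ S.cyl (wordOf ω m)) (n : ℕ) :
    S.f^[n] x ∈ S.g (ω n) '' S.dom := by
  have h := S.arep' hx n 1
  rw [show wordOf (shiftn n ω) 1 = [shiftn n ω 0] from rfl] at h
  have h0 : shiftn n ω 0 = ω n := by simp [shiftn]
  rw [h0] at h
  rw [h]
  exact S.gw_cons_mem (S.aIsub_subset_dom _ (S.aIsub_mem hx (n + 1)))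

end ExpansiveMarkovSystem
lemma amvt_abs {F F' : ℝ → ℝ} {T : Set ℝ}
    (hd : ∀ y ∈ T, HasDerivAt F (F' y) y) :
    ∀ {a b : ℝ}, Set.uIcc a b ⊆ T → ∃ ξ ∈ T, |F b - F a| = |F' ξ| * |b - a| := by
  have main : ∀ {a b : ℝ}, a < b → Set.uIcc a b ⊆ T →
      ∃ ξ ∈ T, |F b - F a| = |F' ξ| * |b - a| := by
    intro a b hab hT
    have hIcc : Set.Icc a b ⊆ T := by
      rw [← Set.uIcc_of_le hab.le]; exact hT
    have hcont : ContinuousOn F (Set.Icc a b) :=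
      fun y hy => (hd y (hIcc hy)).continuousAt.continuousWithinAt
    obtain ⟨c, hc, hslope⟩ := exists_hasDerivAt_eq_slope F F' hab hcont
      (fun y hy => hd y (hIcc (Set.Ioo_subset_Icc_self hy)))
    refine ⟨c, hIcc (Set.Ioo_subset_Icc_self hc), ?_⟩
    have hba : b - a ≠ 0 := by linarith
    have : F' c * (b - a) = F b - F a := by
      rw [hslope]; field_simp
    rw [← this, abs_mul]
  intro a b hT
  rcases lt_trichotomy a b with h | h | h
  · exact main h hT
  · subst h
    refine ⟨a, hT Set.left_mem_uIcc, by simp⟩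
  · obtain ⟨ξ, hξ, heq⟩ := main h (by rwa [Set.uIcc_comm])
    refine ⟨ξ, hξ, ?_⟩
    rw [abs_sub_comm (F a), abs_sub_comm a] at heq
    exact heq

lemma agsum {r : ℝ} (h0 : 0 ≤ r) (h1 : r < 1) (k : ℕ) :
    ∑ j ∈ Finset.range k, r ^ j ≤ (1 - r)⁻¹ := by
  have hr : 0 < 1 - r := by linarith
  rw [inv_eq_one_div, le_div_iff₀ hr]
  have h2 : (∑ j ∈ Finset.range k, r ^ j) * (1 - r) = 1 - r ^ k := by
    have := geom_sum_mul r k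
    nlinarith [this]
  rw [h2]
  have : 0 ≤ r ^ k := pow_nonneg h0 k
  linarith

namespace ExpansiveMarkovSystem

variable {p : ℕ} (S : ExpansiveMarkovSystem p)

lemma aexists_theta : ∃ θ : ℝ, 1 ≤ θ ∧ ∀ i : Fin p, ∀ u ∈ S.dom, ∀ v ∈ S.dom,
    abs (Real.log (abs (S.fder (S.g i u))) - Real.log (abs (S.fder (S.g i v)))) ≤ θ * |u - v| := by
  choose θf hθf using S.hgder_lip
  refine ⟨1 + ∑ i : Fin p, |θf i|, by
    have : 0 ≤ ∑ i : Fin p, |θf i| := Finset.sum_nonneg (fun i _ => abs_nonneg _)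
    linarith, ?_⟩
  intro i u hu v hv
  have hb : θf i ≤ 1 + ∑ i : Fin p, |θf i| := by
    have h1 : |θf i| ≤ ∑ i : Fin p, |θf i| :=
      Finset.single_le_sum (fun i _ => abs_nonneg (θf i)) (Finset.mem_univ i)
    have := le_abs_self (θf i)
    linarith
  have hlip := hθf i u hu v hv
  have heq : abs (Real.log (abs (S.fder (S.g i u))) - Real.log (abs (S.fder (S.g i v))))
      = abs (Real.log (abs (S.gder i u)) - Real.log (abs (S.gder i v))) := by
    rw [S.hfder i u hu, S.hfder i v hv, abs_inv, abs_inv, Real.log_inv, Real.log_inv]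
    rw [abs_sub_comm]
    congr 1
    ring
  rw [heq]
  exact hlip.trans (mul_le_mul_of_nonneg_right hb (abs_nonneg _))

lemma aexists_delta : ∃ δ : ℝ, 0 < δ ∧ ∀ i : Fin p, ∀ s ∈ S.g i '' S.dom,
    Metric.closedBall s δ ⊆ interior (S.Isub i) := by
  have hK : ∀ i : Fin p, IsCompact (S.g i '' S.dom) :=
    fun i => S.adom_compact.image_of_continuousOn (S.ag_cont i)
  have hex : ∀ i : Fin p, ∃ δ, 0 < δ ∧
      Metric.thickening δ (S.g i '' S.dom) ⊆ interior (S.Isub i) :=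
    fun i => (hK i).exists_thickening_subset_open isOpen_interior (S.hg_range i)
  choose δf hδf hsub using hex
  haveI : NeZero p := ⟨S.hp.ne'⟩
  have hne : (Finset.univ : Finset (Fin p)).Nonempty := Finset.univ_nonempty
  have h2 : 0 < Finset.univ.inf' hne δf := by
    rw [Finset.lt_inf'_iff]; exact fun i _ => hδf i
  refine ⟨(Finset.univ.inf' hne δf) / 2, by linarith, ?_⟩
  intro i s hs z hz
  apply hsub i
  rw [Metric.mem_thickening_iff]
  refine ⟨s, hs, ?_⟩
  have h1 : Finset.univ.inf' hne δf ≤ δf i := Finset.inf'_le δf (Finset.mem_univ i)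
  have := Metric.mem_closedBall.1 hz
  calc dist z s ≤ Finset.univ.inf' hne δf / 2 := this
    _ < δf i := by linarith

lemma adist_log {θ : ℝ} (hθ : ∀ i : Fin p, ∀ u ∈ S.dom, ∀ v ∈ S.dom,
      abs (Real.log (abs (S.fder (S.g i u))) - Real.log (abs (S.fder (S.g i v)))) ≤ θ * |u - v|)
    (w : List (Fin p)) {τ σ : ℝ} (hτ : τ ∈ S.dom) (hσ : σ ∈ S.dom) :
    abs (Real.log (abs (S.derIter w.length (S.gw w τ)))
        - Real.log (abs (S.derIter w.length (S.gw w σ)))) ≤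
      θ * ∑ j ∈ Finset.range w.length, |S.gw (w.drop (j + 1)) τ - S.gw (w.drop (j + 1)) σ| := by
  induction w with
  | nil => simp
  | cons i w IH =>
    have hlog : ∀ {t : ℝ}, t ∈ S.dom →
        Real.log (abs (S.derIter (i :: w).length (S.gw (i :: w) t)))
        = Real.log (abs (S.fder (S.g i (S.gw w t))))
          + Real.log (abs (S.derIter w.length (S.gw w t))) := by
      intro t ht
      rw [List.length_cons, derIter_succ', S.f_gw i w ht, abs_mul, Real.log_mul]
      · rfl
      · exact abs_ne_zero.2 (S.afder_ne (S.gw_mem_dom ht))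
      · exact abs_ne_zero.2 (S.derIter_gw_ne ht)
    rw [hlog hτ, hlog hσ]
    set A1 := Real.log (abs (S.fder (S.g i (S.gw w τ))))
    set A2 := Real.log (abs (S.fder (S.g i (S.gw w σ))))
    set B1 := Real.log (abs (S.derIter w.length (S.gw w τ)))
    set B2 := Real.log (abs (S.derIter w.length (S.gw w σ)))
    have htri : abs (A1 + B1 - (A2 + B2)) ≤ abs (A1 - A2) + abs (B1 - B2) := by
      have := abs_add_le (A1 - A2) (B1 - B2)
      calc abs (A1 + B1 - (A2 + B2)) = abs ((A1 - A2) + (B1 - B2)) := by congr 1; ring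
        _ ≤ _ := this
    refine htri.trans ?_
    have h1 : abs (A1 - A2) ≤ θ * |S.gw w τ - S.gw w σ| :=
      hθ i (S.gw w τ) (S.gw_mem_dom hτ) (S.gw w σ) (S.gw_mem_dom hσ)
    have hsum : ∑ j ∈ Finset.range (i :: w).length,
        |S.gw ((i :: w).drop (j + 1)) τ - S.gw ((i :: w).drop (j + 1)) σ|
        = (∑ j ∈ Finset.range w.length, |S.gw (w.drop (j + 1)) τ - S.gw (w.drop (j + 1)) σ|)
          + |S.gw w τ - S.gw w σ| := by
      rw [List.length_cons, Finset.sum_range_succ']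
      simp only [List.drop_succ_cons, List.drop_zero]
    rw [hsum, mul_add]
    linarith [IH]

end ExpansiveMarkovSystem
namespace ExpansiveMarkovSystem

variable {p : ℕ} (S : ExpansiveMarkovSystem p)

set_option maxHeartbeats 1200000 in
lemma akey {x : ℝ} {ω : ℕ → Fin p} (hx : ∀ m, x ∈ S.cyl (wordOf ω m))
    {α β θ ρ C : ℝ} (hα : 0 < α) (hβ : β = α / 2) (hθ1 : 1 ≤ θ)
    (hθ : ∀ i : Fin p, ∀ u ∈ S.dom, ∀ v ∈ S.dom,
      abs (Real.log (abs (S.fder (S.g i u))) - Real.log (abs (S.fder (S.g i v)))) ≤ θ * |u - v|)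
    (hρ : 0 < ρ) (hρβ : θ * ρ * (1 - Real.exp (-β))⁻¹ ≤ β)
    (hδ : ∀ i : Fin p, ∀ s ∈ S.g i '' S.dom, Metric.closedBall s ρ ⊆ interior (S.Isub i))
    (hC : C = Real.exp (θ * ρ * (1 - Real.exp (-β))⁻¹))
    (n : ℕ) (hn : 1 ≤ n) (hht : S.IsHypTime α x n) :
    ∃ r : ℝ, 0 < r ∧ r ≤ ρ * Real.exp (-((n : ℝ) * α)) ∧
      (∀ y ∈ Metric.ball x r, ∀ j < n, S.f^[j] y ∈ S.domF) ∧
      ρ / (2 * C ^ 4) < Metric.diam (S.f^[n] '' Metric.ball x r) ∧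
      (∀ y ∈ Metric.ball x r, ∀ z ∈ Metric.ball x r,
        |S.derIter n y| / |S.derIter n z| < C ^ 4 + 1) := by
  have hβ0 : 0 < β := by rw [hβ]; linarith
  have hθ0 : 0 < θ := by linarith
  have hexpβ : Real.exp (-β) < 1 := by
    have : Real.exp (-β) < Real.exp 0 := Real.exp_lt_exp.2 (by linarith)
    simpa using this
  set E : ℝ := (1 - Real.exp (-β))⁻¹ with hE
  have hE0 : 0 < E := by
    rw [hE]; apply inv_pos.2; linarith
  set s : ℝ := S.f^[n] x with hsdef
  set IC : Set ℝ := Set.Icc (s - ρ) (s + ρ) with hIC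
  have hsg : s ∈ S.g (ω n) '' S.dom := S.as_mem hx n
  have hsub1 : IC ⊆ interior (S.Isub (ω n)) := by
    rw [hIC, ← Real.closedBall_eq_Icc]; exact hδ _ s hsg
  have hsubdom : IC ⊆ S.dom := hsub1.trans S.aInterior_subset_dom
  have hsmem : s ∈ IC := by rw [hIC]; constructor <;> [linarith; linarith]
  set G : ℕ → ℝ → ℝ := fun k t => S.gw (wordOf (shiftn (n - k) ω) k) t with hGdef
  have hG0 : ∀ t : ℝ, G 0 t = t := fun t => rfl
  have hGs : ∀ k, k ≤ n → G k s = S.f^[n - k] x := by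
    intro k hk
    have h := S.arep' hx (n - k) k
    rw [Nat.sub_add_cancel hk] at h
    exact h.symm
  have hGint : ∀ t ∈ IC, ∃ j, t ∈ interior (S.Isub j) := fun t ht => ⟨ω n, hsub1 ht⟩
  have hGd : ∀ k, ∀ t ∈ IC, HasDerivAt (S.f^[k]) (S.derIter k (G k t)) (G k t) := by
    intro k t ht
    have h := S.hasDerivAt_iter_gw (w := wordOf (shiftn (n - k) ω) k) (hGint t ht)
    rwa [wordOf_length] at h
  have hfG : ∀ k, ∀ t ∈ IC, S.f^[k] (G k t) = t := by
    intro k t ht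
    have h := S.iter_gw_full (wordOf (shiftn (n - k) ω) k) (hsubdom ht)
    rwa [wordOf_length] at h
  have hGcont : ∀ k, ContinuousOn (G k) IC :=
    fun k => (S.gw_contOn (wordOf (shiftn (n - k) ω) k)).mono hsubdom
  have hUIcc : ∀ t ∈ IC, ∀ t' ∈ IC, Set.uIcc t t' ⊆ IC := by
    intro t ht t' ht'
    rw [hIC] at ht ht' ⊢
    exact Set.ordConnected_Icc.uIcc_subset ht ht'
  have hGDne : ∀ k, ∀ t ∈ IC, S.derIter k (G k t) ≠ 0 := by
    intro k t ht
    have h := S.derIter_gw_ne (w := wordOf (shiftn (n - k) ω) k) (hsubdom ht)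
    rwa [wordOf_length] at h
  -- Mean value theorem for the branches
  have MVT : ∀ k, ∀ t ∈ IC, ∀ t' ∈ IC, ∃ τ ∈ Set.uIcc t t',
      |t - t'| = |S.derIter k (G k τ)| * |G k t - G k t'| := by
    intro k t ht t' ht'
    have hcont : ContinuousOn (G k) (Set.uIcc t' t) := (hGcont k).mono (hUIcc t' ht' t ht)
    have hsubT : Set.uIcc (G k t') (G k t) ⊆ G k '' Set.uIcc t' t :=
      intermediate_value_uIcc hcont
    have hd : ∀ y ∈ G k '' Set.uIcc t' t, HasDerivAt (S.f^[k]) (S.derIter k y) y := by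
      rintro _ ⟨τ', hτ', rfl⟩
      exact hGd k τ' (hUIcc t' ht' t ht hτ')
    obtain ⟨ξ, hξ, heq⟩ := amvt_abs hd hsubT
    obtain ⟨τ, hτ, rfl⟩ := hξ
    rw [hfG k t ht, hfG k t' ht'] at heq
    exact ⟨τ, by rwa [Set.uIcc_comm], heq⟩
  have hτs_le : ∀ τ ∈ IC, |τ - s| ≤ ρ := by
    intro τ hτ
    rw [hIC] at hτ
    rw [abs_le]
    constructor <;> [linarith [hτ.1]; linarith [hτ.2]]
  -- log-distortion estimate
  have DST : ∀ k, k ≤ n → ∀ t ∈ IC, ∀ t' ∈ IC,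
      abs (Real.log (abs (S.derIter k (G k t))) - Real.log (abs (S.derIter k (G k t')))) ≤
        θ * ∑ j ∈ Finset.range k, |G (k - (j + 1)) t - G (k - (j + 1)) t'| := by
    intro k hk t ht t' ht'
    have h := S.adist_log hθ (wordOf (shiftn (n - k) ω) k) (hsubdom ht) (hsubdom ht')
    rw [wordOf_length] at h
    refine le_trans (by exact h) (le_of_eq ?_)
    congr 1
    apply Finset.sum_congr rfl
    intro j hj
    have hj' := Finset.mem_range.1 hj
    have harith : (n - k) + (j + 1) = n - (k - (j + 1)) := by omega
    have hdrop : (wordOf (shiftn (n - k) ω) k).drop (j + 1)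
        = wordOf (shiftn (n - (k - (j + 1))) ω) (k - (j + 1)) := by
      rw [wordOf_drop, shiftn_shiftn, harith]
    rw [hdrop]
  -- geometric sum bound
  have hgeo : ∀ m : ℕ, ∑ i ∈ Finset.range m, Real.exp (-((i : ℝ) * β)) ≤ E := by
    intro m
    have hrw : ∀ i : ℕ, Real.exp (-((i : ℝ) * β)) = Real.exp (-β) ^ i := by
      intro i
      rw [← Real.exp_nat_mul]
      congr 1
      ring
    calc ∑ i ∈ Finset.range m, Real.exp (-((i : ℝ) * β))
        = ∑ i ∈ Finset.range m, Real.exp (-β) ^ i :=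
          Finset.sum_congr rfl (fun i _ => hrw i)
      _ ≤ E := agsum (Real.exp_pos _).le hexpβ m
  -- backward contraction at the hyperbolic time
  have P : ∀ k, k ≤ n → ∀ t ∈ IC, |G k t - G k s| ≤ Real.exp (-((k : ℝ) * β)) * |t - s| := by
    intro k
    induction k using Nat.strong_induction_on with
    | _ k IH =>
      match k with
      | 0 =>
        intro _ t ht
        rw [hG0 t, hG0 s]
        simp
      | (m + 1) =>
        intro hk t ht
        obtain ⟨τ, hτu, heq⟩ := MVT (m + 1) t ht s hsmem
        have hτIcc : τ ∈ IC := hUIcc t ht s hsmem hτu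
        have hdst := DST (m + 1) hk τ hτIcc s hsmem
        have hsumb : ∑ j ∈ Finset.range (m + 1),
            |G ((m + 1) - (j + 1)) τ - G ((m + 1) - (j + 1)) s| ≤ ρ * E := by
          have hterm : ∀ j ∈ Finset.range (m + 1),
              |G ((m + 1) - (j + 1)) τ - G ((m + 1) - (j + 1)) s|
              ≤ Real.exp (-(((m - j : ℕ) : ℝ) * β)) * ρ := by
            intro j hj
            have hj' := Finset.mem_range.1 hj
            have hmj : (m + 1) - (j + 1) = m - j := by omega
            rw [hmj]
            refine (IH (m - j) (by omega) (by omega) τ hτIcc).trans ?_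
            exact mul_le_mul_of_nonneg_left (hτs_le τ hτIcc) (Real.exp_pos _).le
          refine (Finset.sum_le_sum hterm).trans ?_
          have hreflect : ∑ j ∈ Finset.range (m + 1), Real.exp (-(((m - j : ℕ) : ℝ) * β)) * ρ
              = ∑ i ∈ Finset.range (m + 1), Real.exp (-((i : ℝ) * β)) * ρ := by
            have h := Finset.sum_range_reflect
              (fun i => Real.exp (-((i : ℝ) * β)) * ρ) (m + 1)
            simpa using h
          rw [hreflect, ← Finset.sum_mul]
          calc (∑ i ∈ Finset.range (m + 1), Real.exp (-((i : ℝ) * β))) * ρ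
              ≤ E * ρ := mul_le_mul_of_nonneg_right (hgeo (m + 1)) hρ.le
            _ = ρ * E := mul_comm _ _
        have hdst2 : abs (Real.log (abs (S.derIter (m + 1) (G (m + 1) τ)))
            - Real.log (abs (S.derIter (m + 1) (G (m + 1) s)))) ≤ β := by
          refine (hdst.trans (mul_le_mul_of_nonneg_left hsumb hθ0.le)).trans ?_
          calc θ * (ρ * E) = θ * ρ * E := by ring
            _ ≤ β := hρβ
        have hGms : G (m + 1) s = S.f^[n - (m + 1)] x := hGs (m + 1) hk
        have hhyp : Real.exp (((m + 1 : ℕ) : ℝ) * α) ≤ abs (S.derIter (m + 1) (G (m + 1) s)) := by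
          rw [hGms]
          exact hht (m + 1) (by omega) hk
        have hDτpos : 0 < abs (S.derIter (m + 1) (G (m + 1) τ)) :=
          abs_pos.2 (hGDne (m + 1) τ hτIcc)
        have hDspos : 0 < abs (S.derIter (m + 1) (G (m + 1) s)) :=
          lt_of_lt_of_le (Real.exp_pos _) hhyp
        have hlog1 : ((m + 1 : ℕ) : ℝ) * α ≤ Real.log (abs (S.derIter (m + 1) (G (m + 1) s))) := by
          have h := Real.log_le_log (Real.exp_pos _) hhyp
          rwa [Real.log_exp] at h
        have hlog2 : ((m + 1 : ℕ) : ℝ) * β ≤ Real.log (abs (S.derIter (m + 1) (G (m + 1) τ))) := by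
          have h1 := (abs_le.1 hdst2).1
          have hcast : ((m + 1 : ℕ) : ℝ) = (m : ℝ) + 1 := by push_cast; ring
          have hm0 : (0 : ℝ) ≤ (m : ℝ) := by positivity
          have hα2 : α = 2 * β := by rw [hβ]; ring
          rw [hcast] at hlog1 ⊢
          rw [hα2] at hlog1
          nlinarith [mul_nonneg hm0 hβ0.le, h1]
        have hDτ : Real.exp (((m + 1 : ℕ) : ℝ) * β) ≤ abs (S.derIter (m + 1) (G (m + 1) τ)) := by
          calc Real.exp (((m + 1 : ℕ) : ℝ) * β)
              ≤ Real.exp (Real.log (abs (S.derIter (m + 1) (G (m + 1) τ)))) :=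
                Real.exp_le_exp.2 hlog2
            _ = abs (S.derIter (m + 1) (G (m + 1) τ)) := Real.exp_log hDτpos
        have habs : |G (m + 1) t - G (m + 1) s| * Real.exp (((m + 1 : ℕ) : ℝ) * β) ≤ |t - s| := by
          rw [heq]
          calc |G (m + 1) t - G (m + 1) s| * Real.exp (((m + 1 : ℕ) : ℝ) * β)
              ≤ |G (m + 1) t - G (m + 1) s| * abs (S.derIter (m + 1) (G (m + 1) τ)) :=
                mul_le_mul_of_nonneg_left hDτ (abs_nonneg _)
            _ = abs (S.derIter (m + 1) (G (m + 1) τ)) * |G (m + 1) t - G (m + 1) s| :=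
                mul_comm _ _
        have hexp0 : (0 : ℝ) < Real.exp (((m + 1 : ℕ) : ℝ) * β) := Real.exp_pos _
        rw [Real.exp_neg, inv_mul_eq_div, le_div_iff₀ hexp0]
        exact habs
  -- global distortion vs x
  have hxGn : x = G n s := by
    have h1 := S.arep hx n
    rw [← hsdef] at h1
    have h2 : G n s = S.gw (wordOf ω n) s := by
      show S.gw (wordOf (shiftn (n - n) ω) n) s = S.gw (wordOf ω n) s
      rw [Nat.sub_self, shiftn_zero]
    rw [h2]
    exact h1
  set A : ℝ := |S.derIter n x| with hA
  have hApos : 0 < A := by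
    rw [hA, hxGn]
    exact abs_pos.2 (hGDne n s hsmem)
  have hAexp : Real.exp ((n : ℝ) * α) ≤ A := by
    have h := hht n hn le_rfl
    rw [Nat.sub_self] at h
    simpa using h
  have hC0 : 0 < C := by rw [hC]; exact Real.exp_pos _
  have hC1 : 1 ≤ C := by
    rw [hC, show (1 : ℝ) = Real.exp 0 from (Real.exp_zero).symm]
    apply Real.exp_le_exp.2
    positivity
  have hlogC : Real.log C = θ * ρ * E := by rw [hC, Real.log_exp]
  -- sum bound using P
  have SUMB : ∀ t ∈ IC, ∀ t' ∈ IC,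
      ∑ j ∈ Finset.range n, |G (n - (j + 1)) t - G (n - (j + 1)) t'| ≤ 2 * (ρ * E) := by
    intro t ht t' ht'
    have hterm : ∀ j ∈ Finset.range n,
        |G (n - (j + 1)) t - G (n - (j + 1)) t'|
        ≤ Real.exp (-(((n - 1 - j : ℕ) : ℝ) * β)) * (2 * ρ) := by
      intro j hj
      have hj' := Finset.mem_range.1 hj
      have hmj : n - (j + 1) = n - 1 - j := by omega
      rw [hmj]
      have htri : |G (n - 1 - j) t - G (n - 1 - j) t'|
          ≤ |G (n - 1 - j) t - G (n - 1 - j) s| + |G (n - 1 - j) t' - G (n - 1 - j) s| := by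
        have := abs_sub_abs_le_abs_sub (G (n - 1 - j) t - G (n - 1 - j) s)
          (G (n - 1 - j) t' - G (n - 1 - j) s)
        calc |G (n - 1 - j) t - G (n - 1 - j) t'|
            = |(G (n - 1 - j) t - G (n - 1 - j) s) - (G (n - 1 - j) t' - G (n - 1 - j) s)| := by
              congr 1; ring
          _ ≤ _ := abs_sub _ _
      refine htri.trans ?_
      have h1 := (P (n - 1 - j) (by omega) t ht).trans
        (mul_le_mul_of_nonneg_left (hτs_le t ht) (Real.exp_pos _).le)
      have h2 := (P (n - 1 - j) (by omega) t' ht').trans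
        (mul_le_mul_of_nonneg_left (hτs_le t' ht') (Real.exp_pos _).le)
      calc |G (n - 1 - j) t - G (n - 1 - j) s| + |G (n - 1 - j) t' - G (n - 1 - j) s|
          ≤ Real.exp (-(((n - 1 - j : ℕ) : ℝ) * β)) * ρ
            + Real.exp (-(((n - 1 - j : ℕ) : ℝ) * β)) * ρ := by linarith
        _ = Real.exp (-(((n - 1 - j : ℕ) : ℝ) * β)) * (2 * ρ) := by ring
    refine (Finset.sum_le_sum hterm).trans ?_
    have hreflect : ∑ j ∈ Finset.range n, Real.exp (-(((n - 1 - j : ℕ) : ℝ) * β)) * (2 * ρ)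
        = ∑ i ∈ Finset.range n, Real.exp (-((i : ℝ) * β)) * (2 * ρ) :=
      Finset.sum_range_reflect (fun i => Real.exp (-((i : ℝ) * β)) * (2 * ρ)) n
    rw [hreflect, ← Finset.sum_mul]
    calc (∑ i ∈ Finset.range n, Real.exp (-((i : ℝ) * β))) * (2 * ρ)
        ≤ E * (2 * ρ) := mul_le_mul_of_nonneg_right (hgeo n) (by linarith)
      _ = 2 * (ρ * E) := by ring
  -- two-sided derivative bounds on the pre-ball
  have hDbound : ∀ t ∈ IC, A / C ^ 2 ≤ |S.derIter n (G n t)| ∧ |S.derIter n (G n t)| ≤ C ^ 2 * A := by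
    intro t ht
    have hdst := (DST n le_rfl t ht s hsmem).trans
      (mul_le_mul_of_nonneg_left (SUMB t ht s hsmem) hθ0.le)
    have hb : abs (Real.log (abs (S.derIter n (G n t))) - Real.log (abs (S.derIter n (G n s))))
        ≤ 2 * Real.log C := by
      refine hdst.trans ?_
      rw [hlogC]
      calc θ * (2 * (ρ * E)) = 2 * (θ * ρ * E) := by ring
        _ ≤ 2 * (θ * ρ * E) := le_rfl
    have hDt0 : 0 < |S.derIter n (G n t)| := abs_pos.2 (hGDne n t ht)
    have hGsx : Real.log (abs (S.derIter n (G n s))) = Real.log A := by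
      rw [hA, hxGn]
    rw [hGsx] at hb
    have hb1 := (abs_le.1 hb).1
    have hb2 := (abs_le.1 hb).2
    constructor
    · have : Real.log A - 2 * Real.log C ≤ Real.log (abs (S.derIter n (G n t))) := by linarith
      have h2 : Real.exp (Real.log A - 2 * Real.log C) ≤ |S.derIter n (G n t)| := by
        calc Real.exp (Real.log A - 2 * Real.log C)
            ≤ Real.exp (Real.log (abs (S.derIter n (G n t)))) := Real.exp_le_exp.2 this
          _ = _ := Real.exp_log hDt0
      have h3 : Real.exp (Real.log A - 2 * Real.log C) = A / C ^ 2 := by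
        rw [Real.exp_sub, Real.exp_log hApos]
        congr 1
        rw [show (2 : ℝ) * Real.log C = Real.log C + Real.log C by ring, Real.exp_add,
          Real.exp_log hC0]
        ring
      rwa [h3] at h2
    · have : Real.log (abs (S.derIter n (G n t))) ≤ Real.log A + 2 * Real.log C := by linarith
      have h2 : |S.derIter n (G n t)| ≤ Real.exp (Real.log A + 2 * Real.log C) := by
        calc |S.derIter n (G n t)| = Real.exp (Real.log (abs (S.derIter n (G n t)))) :=
              (Real.exp_log hDt0).symm
          _ ≤ _ := Real.exp_le_exp.2 this
      have h3 : Real.exp (Real.log A + 2 * Real.log C) = C ^ 2 * A := by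
        rw [Real.exp_add, Real.exp_log hApos]
        rw [show (2 : ℝ) * Real.log C = Real.log C + Real.log C by ring, Real.exp_add,
          Real.exp_log hC0]
        ring
      rwa [h3] at h2
  -- the radius
  set r : ℝ := ρ / (A * C ^ 2) with hr
  have hr0 : 0 < r := by rw [hr]; positivity
  have hrle : r ≤ ρ * Real.exp (-((n : ℝ) * α)) := by
    rw [hr, Real.exp_neg, ← div_eq_mul_inv]
    apply div_le_div_of_nonneg_left hρ.le (Real.exp_pos _)
    calc Real.exp ((n : ℝ) * α) ≤ A := hAexp
      _ = A * 1 := (mul_one A).symm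
      _ ≤ A * C ^ 2 := by
        have h1 : (1 : ℝ) ≤ C ^ 2 := by nlinarith [hC1, hC0]
        nlinarith [mul_nonneg hApos.le (sub_nonneg.2 h1)]
  -- the ball is inside the image of the pre-interval
  have hsl : s - ρ ∈ IC := by rw [hIC]; constructor <;> linarith
  have hsr : s + ρ ∈ IC := by rw [hIC]; constructor <;> linarith
  have hside : ∀ t ∈ IC, |t - s| = ρ → r ≤ |G n t - x| := by
    intro t ht hts
    obtain ⟨τ, hτu, heq⟩ := MVT n t ht s hsmem
    have hτIcc : τ ∈ IC := hUIcc t ht s hsmem hτu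
    have hup := (hDbound τ hτIcc).2
    rw [hts] at heq
    rw [hxGn]
    by_contra hcon
    push_neg at hcon
    have h0 : 0 ≤ |G n t - G n s| := abs_nonneg _
    have hstep : |S.derIter n (G n τ)| * |G n t - G n s| < (C ^ 2 * A) * r := by
      calc |S.derIter n (G n τ)| * |G n t - G n s|
          ≤ (C ^ 2 * A) * |G n t - G n s| := mul_le_mul_of_nonneg_right hup h0
        _ < (C ^ 2 * A) * r := by
            apply mul_lt_mul_of_pos_left hcon
            positivity
    rw [← heq] at hstep
    have hA' : A ≠ 0 := ne_of_gt hApos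
    have hC' : C ≠ 0 := ne_of_gt hC0
    have e : (C ^ 2 * A) * r = ρ := by
      rw [hr]
      field_simp
    rw [e] at hstep
    exact lt_irrefl ρ hstep
  have hinjG : Set.InjOn (G n) IC := by
    intro t ht t' ht' h
    have h1 := hfG n t ht
    rw [h, hfG n t' ht'] at h1
    exact h1.symm
  have hballV : Metric.ball x r ⊆ G n '' IC := by
    have hmono := ContinuousOn.strictMonoOn_of_injOn_Icc'
      (by linarith : s - ρ ≤ s + ρ) (by rw [← hIC]; exact hGcont n) (by rw [← hIC]; exact hinjG)
    have hv1 := hside (s - ρ) hsl (by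
      rw [abs_of_nonpos (by linarith : s - ρ - s ≤ 0)]
      ring)
    have hv2 := hside (s + ρ) hsr (by
      rw [show s + ρ - s = ρ by ring]
      exact abs_of_nonneg hρ.le)
    intro y hy
    have hy' : |y - x| < r := by rwa [Metric.mem_ball, Real.dist_eq] at hy
    rcases hmono with hm | hm
    · have h1 : G n (s - ρ) < x := by
        rw [hxGn]
        exact hm (by rw [← hIC]; exact hsl) (by rw [← hIC]; exact hsmem) (by linarith)
      have h2 : x < G n (s + ρ) := by
        rw [hxGn]
        exact hm (by rw [← hIC]; exact hsmem) (by rw [← hIC]; exact hsr) (by linarith)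
      have e1 : |G n (s - ρ) - x| = x - G n (s - ρ) := by
        rw [abs_of_nonpos (by linarith : G n (s - ρ) - x ≤ 0)]
        ring
      have e2 : |G n (s + ρ) - x| = G n (s + ρ) - x := abs_of_nonneg (by linarith)
      rw [e1] at hv1
      rw [e2] at hv2
      have hmem : y ∈ Set.Icc (G n (s - ρ)) (G n (s + ρ)) := by
        constructor
        · have := (abs_le.1 hy'.le).1; linarith
        · have := (abs_le.1 hy'.le).2; linarith
      have := intermediate_value_Icc (by linarith : s - ρ ≤ s + ρ)
        (by rw [← hIC]; exact hGcont n)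
      have h3 := this hmem
      obtain ⟨t, htIcc, hGt⟩ := h3
      exact ⟨t, by rw [hIC]; exact htIcc, hGt⟩
    · have h1 : G n (s + ρ) < x := by
        rw [hxGn]
        exact hm (by rw [← hIC]; exact hsmem) (by rw [← hIC]; exact hsr) (by linarith)
      have h2 : x < G n (s - ρ) := by
        rw [hxGn]
        exact hm (by rw [← hIC]; exact hsl) (by rw [← hIC]; exact hsmem) (by linarith)
      have e1 : |G n (s + ρ) - x| = x - G n (s + ρ) := by
        rw [abs_of_nonpos (by linarith : G n (s + ρ) - x ≤ 0)]
        ring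
      have e2 : |G n (s - ρ) - x| = G n (s - ρ) - x := abs_of_nonneg (by linarith)
      rw [e1] at hv2
      rw [e2] at hv1
      have hmem : y ∈ Set.Icc (G n (s + ρ)) (G n (s - ρ)) := by
        constructor
        · have := (abs_le.1 hy'.le).1; linarith
        · have := (abs_le.1 hy'.le).2; linarith
      have := intermediate_value_Icc' (by linarith : s - ρ ≤ s + ρ)
        (by rw [← hIC]; exact hGcont n)
      obtain ⟨t, htIcc, hGt⟩ := this hmem
      exact ⟨t, by rw [hIC]; exact htIcc, hGt⟩
  have hpar : ∀ y ∈ Metric.ball x r, ∃ t, t ∈ IC ∧ y = G n t ∧ S.f^[n] y = t := by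
    intro y hy
    obtain ⟨t, ht, hGt⟩ := hballV hy
    exact ⟨t, ht, hGt.symm, by rw [← hGt]; exact hfG n t ht⟩
  refine ⟨r, hr0, hrle, ?_, ?_, ?_⟩
  · -- orbit stays in the domain of f
    intro y hy j hj
    obtain ⟨t, ht, hyt, -⟩ := hpar y hy
    have hiter : S.f^[j] y = S.gw ((wordOf (shiftn (n - n) ω) n).drop j) t := by
      rw [hyt]
      exact S.iter_gw j _ (hsubdom ht) (by rw [wordOf_length]; omega)
    have hlen : ((wordOf (shiftn (n - n) ω) n).drop j).length = n - j := by
      rw [List.length_drop, wordOf_length]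
    have hne : (wordOf (shiftn (n - n) ω) n).drop j ≠ [] := by
      intro hcon
      rw [hcon] at hlen
      simp at hlen
      omega
    obtain ⟨i0, w0, hw0⟩ := List.exists_cons_of_ne_nil hne
    rw [hw0] at hiter
    rw [hiter]
    exact Set.mem_iUnion.2 ⟨i0, S.gw_cons_mem (hsubdom ht)⟩
  · -- diameter of the image is large
    have hy1 : x - r / 2 ∈ Metric.ball x r := by
      rw [Metric.mem_ball, Real.dist_eq]
      rw [show x - r / 2 - x = -(r / 2) by ring, abs_neg, abs_of_pos (by linarith)]
      linarith
    have hy2 : x + r / 2 ∈ Metric.ball x r := by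
      rw [Metric.mem_ball, Real.dist_eq]
      rw [show x + r / 2 - x = r / 2 by ring, abs_of_pos (by linarith)]
      linarith
    obtain ⟨t₁, ht₁, hyt₁, hft₁⟩ := hpar _ hy1
    obtain ⟨t₂, ht₂, hyt₂, hft₂⟩ := hpar _ hy2
    obtain ⟨τ, hτu, heq⟩ := MVT n t₁ ht₁ t₂ ht₂
    have hτIcc : τ ∈ IC := hUIcc t₁ ht₁ t₂ ht₂ hτu
    have hG12 : |G n t₁ - G n t₂| = r := by
      rw [← hyt₁, ← hyt₂]
      rw [show x - r / 2 - (x + r / 2) = -r by ring, abs_neg, abs_of_pos hr0]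
    have hlow := (hDbound τ hτIcc).1
    have ht12 : ρ / C ^ 4 ≤ |t₁ - t₂| := by
      rw [heq, hG12, hr]
      have hC2 : (0 : ℝ) < C ^ 2 := by positivity
      have e1 : (A / C ^ 2) * (ρ / (A * C ^ 2)) = ρ / C ^ 4 := by
        field_simp
      calc ρ / C ^ 4 = (A / C ^ 2) * (ρ / (A * C ^ 2)) := e1.symm
        _ ≤ |S.derIter n (G n τ)| * (ρ / (A * C ^ 2)) :=
            mul_le_mul_of_nonneg_right hlow (by positivity)
    have himb : S.f^[n] '' Metric.ball x r ⊆ IC := by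
      rintro - ⟨y, hy, rfl⟩
      obtain ⟨t, ht, -, hft⟩ := hpar y hy
      rw [hft]
      exact ht
    have hbd : Bornology.IsBounded (S.f^[n] '' Metric.ball x r) := by
      apply Bornology.IsBounded.subset _ himb
      rw [hIC]
      exact Metric.isBounded_Icc _ _
    have hmem1 : S.f^[n] (x - r / 2) ∈ S.f^[n] '' Metric.ball x r := Set.mem_image_of_mem _ hy1
    have hmem2 : S.f^[n] (x + r / 2) ∈ S.f^[n] '' Metric.ball x r := Set.mem_image_of_mem _ hy2
    have hdd := Metric.dist_le_diam_of_mem hbd hmem1 hmem2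
    rw [Real.dist_eq, hft₁, hft₂] at hdd
    have hC4 : (0 : ℝ) < C ^ 4 := by positivity
    have hCge : ρ / (2 * C ^ 4) < ρ / C ^ 4 := by
      have e : ρ / (2 * C ^ 4) = (ρ / C ^ 4) / 2 := by ring
      have hpos : 0 < ρ / C ^ 4 := by positivity
      rw [e]
      linarith
    calc ρ / (2 * C ^ 4) < ρ / C ^ 4 := hCge
      _ ≤ |t₁ - t₂| := ht12
      _ ≤ _ := hdd
  · -- bounded distortion on the ball
    intro y hy z hz
    obtain ⟨ty, hty, hyty, -⟩ := hpar y hy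
    obtain ⟨tz, htz, hztz, -⟩ := hpar z hz
    have h1 : |S.derIter n y| ≤ C ^ 2 * A := by rw [hyty]; exact (hDbound ty hty).2
    have h2 : A / C ^ 2 ≤ |S.derIter n z| := by rw [hztz]; exact (hDbound tz htz).1
    have hACpos : (0 : ℝ) < A / C ^ 2 := by positivity
    have h3 : |S.derIter n y| / |S.derIter n z| ≤ (C ^ 2 * A) / (A / C ^ 2) :=
      div_le_div₀ (by positivity) h1 hACpos h2
    have h4 : (C ^ 2 * A) / (A / C ^ 2) = C ^ 4 := by
      field_simp
    rw [h4] at h3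
    linarith

end ExpansiveMarkovSystem
/-- For every `α > 0`, `H_HT(α) ⊆ H`: every point with infinitely many
hyperbolic times with exponent `α` has infinitely many hyperbolic instants. -/
theorem HHT_subset_hypSet {p : ℕ} (S : ExpansiveMarkovSystem p) (α : ℝ) (hα : 0 < α) :
    S.HHT α ⊆ S.hypSet := by
  intro x hx
  obtain ⟨hlim, hht⟩ := hx
  obtain ⟨ω, hQ, hcyl⟩ := hlim
  have hlim' : x ∈ S.limitSet := ⟨ω, hQ, hcyl⟩
  have hcyl' : ∀ m, x ∈ S.cyl (wordOf ω m) := fun m => hcyl m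
  obtain ⟨θ, hθ1, hθ⟩ := S.aexists_theta
  obtain ⟨δ₀, hδ₀, hδ⟩ := S.aexists_delta
  have hθ0 : 0 < θ := by linarith
  set β : ℝ := α / 2 with hβ
  have hβ0 : 0 < β := by rw [hβ]; linarith
  have hexpβ : Real.exp (-β) < 1 := by
    have : Real.exp (-β) < Real.exp 0 := Real.exp_lt_exp.2 (by linarith)
    simpa using this
  set E : ℝ := (1 - Real.exp (-β))⁻¹ with hE
  have hE0 : 0 < E := by rw [hE]; apply inv_pos.2; linarith
  set ρ : ℝ := min δ₀ (β / (θ * E)) with hρdef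
  have hρ0 : 0 < ρ := lt_min hδ₀ (by positivity)
  have hρβ : θ * ρ * E ≤ β := by
    have h1 : ρ ≤ β / (θ * E) := min_le_right _ _
    have h2 : θ * ρ * E ≤ θ * (β / (θ * E)) * E := by
      have := mul_le_mul_of_nonneg_left h1 hθ0.le
      exact mul_le_mul_of_nonneg_right this hE0.le
    have h3 : θ * (β / (θ * E)) * E = β := by
      field_simp
    linarith
  have hδρ : ∀ i : Fin p, ∀ s ∈ S.g i '' S.dom,
      Metric.closedBall s ρ ⊆ interior (S.Isub i) := by
    intro i s hs
    exact (Metric.closedBall_subset_closedBall (min_le_left _ _)).trans (hδ i s hs)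
  set C : ℝ := Real.exp (θ * ρ * E) with hC
  have hC0 : 0 < C := Real.exp_pos _
  -- hyperbolic times
  have EX : ∀ N : ℕ, ∃ n, N + 1 ≤ n ∧ S.IsHypTime α x n := fun N => hht (N + 1)
  choose nf hnf1 hnf2 using EX
  have hkey : ∀ N : ℕ, ∃ r : ℝ, 0 < r ∧ r ≤ ρ * Real.exp (-((nf N : ℝ) * α)) ∧
      (∀ y ∈ Metric.ball x r, ∀ j < nf N, S.f^[j] y ∈ S.domF) ∧
      ρ / (2 * C ^ 4) < Metric.diam (S.f^[nf N] '' Metric.ball x r) ∧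
      (∀ y ∈ Metric.ball x r, ∀ z ∈ Metric.ball x r,
        |S.derIter (nf N) y| / |S.derIter (nf N) z| < C ^ 4 + 1) := by
    intro N
    exact S.akey hcyl' hα hβ hθ1 hθ hρ0 hρβ hδρ hC (nf N) (by have := hnf1 N; omega) (hnf2 N)
  choose rf hrf0 hrfle hrfc1 hrfc2 hrfc3 using hkey
  -- selection of a subsequence with decreasing radii
  have hexpα : Real.exp (-α) < 1 := by
    have : Real.exp (-α) < Real.exp 0 := Real.exp_lt_exp.2 (by linarith)
    simpa using this
  have hpow : Filter.Tendsto (fun M : ℕ => ρ * Real.exp (-α) ^ M) Filter.atTop (nhds 0) := by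
    have h1 : Filter.Tendsto (fun M : ℕ => Real.exp (-α) ^ M) Filter.atTop (nhds 0) :=
      tendsto_pow_atTop_nhds_zero_of_lt_one (Real.exp_pos _).le hexpα
    have h2 := h1.const_mul ρ
    simpa using h2
  have hexp_pow : ∀ M : ℕ, Real.exp (-((M : ℝ) * α)) = Real.exp (-α) ^ M := by
    intro M
    rw [← Real.exp_nat_mul]
    congr 1
    ring
  have step : ∀ j : ℕ, ∃ N, nf j < nf N ∧ ρ * Real.exp (-((nf N : ℝ) * α)) < rf j := by
    intro j
    have h3 : ∀ᶠ M : ℕ in Filter.atTop, ρ * Real.exp (-α) ^ M < rf j :=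
      hpow.eventually_lt_const (hrf0 j)
    obtain ⟨M, hM⟩ := h3.exists
    refine ⟨max (nf j) M, ?_, ?_⟩
    · have hge := hnf1 (max (nf j) M)
      have h4 : nf j ≤ max (nf j) M := le_max_left _ _
      omega
    · have hge := hnf1 (max (nf j) M)
      have hMle : M ≤ nf (max (nf j) M) := by
        have := le_max_right (nf j) M
        omega
      have hcast : (M : ℝ) ≤ ((nf (max (nf j) M) : ℕ) : ℝ) := by exact_mod_cast hMle
      have h5 : Real.exp (-((nf (max (nf j) M) : ℝ) * α)) ≤ Real.exp (-((M : ℝ) * α)) := by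
        apply Real.exp_le_exp.2
        have := mul_le_mul_of_nonneg_right hcast hα.le
        linarith
      calc ρ * Real.exp (-((nf (max (nf j) M) : ℝ) * α))
          ≤ ρ * Real.exp (-((M : ℝ) * α)) := mul_le_mul_of_nonneg_left h5 hρ0.le
        _ = ρ * Real.exp (-α) ^ M := by rw [hexp_pow]
        _ < rf j := hM
  let ψ : ℕ → ℕ := fun k => Nat.rec 0 (fun _ prev => Classical.choose (step prev)) k
  have hψsucc : ∀ k, ψ (k + 1) = Classical.choose (step (ψ k)) := fun k => rfl
  have hspec : ∀ k, nf (ψ k) < nf (ψ (k + 1)) ∧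
      ρ * Real.exp (-((nf (ψ (k + 1)) : ℝ) * α)) < rf (ψ k) := by
    intro k
    rw [hψsucc]
    exact Classical.choose_spec (step (ψ k))
  have hmono : StrictMono (fun k => nf (ψ k)) :=
    strictMono_nat_of_lt_succ (fun k => (hspec k).1)
  have hanti : Antitone (fun k => rf (ψ k)) := by
    apply antitone_nat_of_succ_le
    intro k
    exact ((hrfle (ψ (k + 1))).trans_lt (hspec k).2).le
  have htend : Filter.Tendsto (fun k => rf (ψ k)) Filter.atTop (nhds 0) := by
    apply squeeze_zero (fun k => (hrf0 (ψ k)).le) (g := fun k => ρ * Real.exp (-α) ^ k)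
    · intro k
      have hk : k ≤ nf (ψ k) := hmono.le_apply
      have hcast : (k : ℝ) ≤ ((nf (ψ k) : ℕ) : ℝ) := by exact_mod_cast hk
      have h5 : Real.exp (-((nf (ψ k) : ℝ) * α)) ≤ Real.exp (-((k : ℝ) * α)) := by
        apply Real.exp_le_exp.2
        have := mul_le_mul_of_nonneg_right hcast hα.le
        linarith
      calc rf (ψ k) ≤ ρ * Real.exp (-((nf (ψ k) : ℝ) * α)) := hrfle (ψ k)
        _ ≤ ρ * Real.exp (-((k : ℝ) * α)) := mul_le_mul_of_nonneg_left h5 hρ0.le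
        _ = ρ * Real.exp (-α) ^ k := by rw [hexp_pow]
    · exact hpow
  refine ⟨hlim', ρ / (2 * C ^ 4), ?_, C ^ 4 + 1, by positivity,
    (fun k => nf (ψ k)), hmono, (fun k => rf (ψ k)), (fun k => hrf0 (ψ k)),
    hanti, htend, ?_⟩
  · apply div_pos hρ0
    positivity
  · intro k
    exact ⟨hrfc1 (ψ k), hrfc2 (ψ k), hrfc3 (ψ k)⟩
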